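/- The cycle graph C_n is not 12-representable for any n ≥ 5: for every labeling of the vertices of C_n by distinct positive integers, no word 12-represents the resulting labeled graph. -/

import Mathlib

/-- A word has no 12-match iff no two consecutive letters form a strictly
increasing pair, i.e. the word is weakly decreasing at each step. -/
def NoMatch12 (w : List ℕ) : Prop := w.Chain' (fun a b => b ≤ a)

/-- `w` 12-represents the labeled graph with vertex set `V ⊂ ℕ` and edge relation
`E`: every vertex occurs in `w`, all letters of `w` are vertices, and for all
distinct vertices `x, y`: `xy` is an edge iff the subsequence of `w` consisting of
occurrences of `x` and `y` has no 12-match. -/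
def Rep12 (V : Finset ℕ) (E : ℕ → ℕ → Prop) (w : List ℕ) : Prop :=
  (∀ v ∈ V, v ∈ w) ∧ (∀ a ∈ w, a ∈ V) ∧
    ∀ x ∈ V, ∀ y ∈ V, x ≠ y →
      (E x y ↔ NoMatch12 (w.filter (fun a => a = x ∨ a = y)))

namespace Stmt12Aux

open List

/-- Adjacency on the cycle. -/
def adj (n : ℕ) [NeZero n] (i j : Fin n) : Prop := j = i + 1 ∨ i = j + 1

lemma adj_symm {n : ℕ} [NeZero n] {i j : Fin n} (h : adj n i j) : adj n j i := Or.symm h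

lemma two_distinct {x y : ℕ} (hxy : x ≠ y) :
    ∀ w : List ℕ, x ∈ w → y ∈ w → [x, y] <+ w ∨ [y, x] <+ w := by
  intro w
  induction w with
  | nil => intro hx _; cases hx
  | cons e t ih =>
    intro hx hy
    rcases mem_cons.mp hx with hx' | hx'
    · subst hx'
      have hy' : y ∈ t := by
        rcases mem_cons.mp hy with h | h
        · exact absurd h.symm hxy
        · exact h
      exact Or.inl (Sublist.cons₂ x (singleton_sublist.mpr hy'))
    · rcases mem_cons.mp hy with hy' | hy'
      · subst hy'
        exact Or.inr (Sublist.cons₂ y (singleton_sublist.mpr hx'))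
      · exact (ih hx' hy').imp (fun h => Sublist.cons e h) (fun h => Sublist.cons e h)

lemma before_trans (x y z : ℕ) (hyz : y ≠ z) :
    ∀ w : List ℕ, ¬ ([y, x] <+ w) → ¬ ([z, y] <+ w) → y ∈ w → [z, x] <+ w → False := by
  intro w
  induction w with
  | nil => intro _ _ hy _; cases hy
  | cons e t ih =>
    intro h1 h2 hy h3
    cases h3 with
    | cons _ h3' =>
      rcases mem_cons.mp hy with hy' | hy'
      · subst hy'
        have hx : x ∈ t := h3'.subset (by simp)
        exact h1 (Sublist.cons₂ y (singleton_sublist.mpr hx))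
      · exact ih (fun h => h1 (Sublist.cons e h)) (fun h => h2 (Sublist.cons e h)) hy' h3'
    | cons_cons _ h3' =>
      have hy' : y ∈ t := by
        rcases mem_cons.mp hy with h | h
        · exact absurd h hyz
        · exact h
      exact h2 (Sublist.cons₂ z (singleton_sublist.mpr hy'))

lemma two_two (a b c d : ℕ) :
    ∀ w : List ℕ, ¬ ([b, a] <+ w) → ¬ ([d, c] <+ w) → [d, a] <+ w → [b, c] <+ w → False := by
  intro w
  induction w with
  | nil => intro _ _ h3 _; simp at h3
  | cons e t ih =>
    intro h1 h2 h3 h4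
    cases h3 with
    | cons _ h3' =>
      cases h4 with
      | cons _ h4' =>
        exact ih (fun h => h1 (Sublist.cons e h)) (fun h => h2 (Sublist.cons e h)) h3' h4'
      | cons_cons _ h4' =>
        have ha : a ∈ t := h3'.subset (by simp)
        exact h1 (Sublist.cons₂ b (singleton_sublist.mpr ha))
    | cons_cons _ h3' =>
      have hc : c ∈ t := by
        cases h4 with
        | cons _ h4' => exact h4'.subset (by simp)
        | cons_cons _ h4' => exact singleton_sublist.mp h4'
      exact h2 (Sublist.cons₂ d (singleton_sublist.mpr hc))

lemma key (w : List ℕ) (x y : ℕ) (hyx : y < x) :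
    NoMatch12 (w.filter (fun a => a = x ∨ a = y)) ↔ ¬ ([y, x] <+ w) := by
  haveI : IsTrans ℕ (fun a b => b ≤ a) := ⟨fun a b c h1 h2 => le_trans h2 h1⟩
  rw [NoMatch12, List.Chain', List.isChain_iff_pairwise, List.pairwise_iff_forall_sublist]
  constructor
  · intro H hsub
    have hf : [y, x] <+ w.filter (fun a => decide (a = x ∨ a = y)) := by
      have h := hsub.filter (fun a => decide (a = x ∨ a = y))
      simpa using h
    have := H hf
    omega
  · intro hne a b hs
    have hw' : [a, b] <+ w := hs.trans (filter_sublist (l := w))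
    have hamem := hs.subset (show a ∈ [a, b] by simp)
    have hbmem := hs.subset (show b ∈ [a, b] by simp)
    rw [mem_filter] at hamem hbmem
    have ha : a = x ∨ a = y := by simpa using hamem.2
    have hb : b = x ∨ b = y := by simpa using hbmem.2
    rcases ha with rfl | rfl <;> rcases hb with rfl | rfl
    · exact le_refl _
    · omega
    · exact absurd hw' hne
    · exact le_refl _

end Stmt12Aux

open List Fin.NatCast in
/-- the cycle `C_n`, `n ≥ 5`, is not 12-representable: for every
labeling of its vertices by distinct positive integers, no word 12-represents the
resulting labeled graph. -/
theorem stmt_12 (n : ℕ) [NeZero n] (hn : 5 ≤ n) (v : Fin n → ℕ)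
    (hv : Function.Injective v) (hpos : ∀ i, 0 < v i) :
    ¬ ∃ w, Rep12 (Finset.image v Finset.univ)
        (fun a b => ∃ i : Fin n,
          (a = v i ∧ b = v (i + 1)) ∨ (b = v i ∧ a = v (i + 1)))
        w := by
  rintro ⟨w, hw⟩
  obtain ⟨hall, hmemV, hiff⟩ := hw
  have hVmem : ∀ i : Fin n, v i ∈ Finset.image v Finset.univ :=
    fun i => Finset.mem_image_of_mem v (Finset.mem_univ i)
  have hmemw : ∀ i : Fin n, v i ∈ w := fun i => hall _ (hVmem i)
  have hvne : ∀ {i j : Fin n}, i ≠ j → v i ≠ v j := fun hij h => hij (hv h)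
  -- edge relation corresponds to adjacency of indices
  have hE : ∀ i j : Fin n,
      (∃ t : Fin n, (v i = v t ∧ v j = v (t + 1)) ∨ (v j = v t ∧ v i = v (t + 1))) ↔
        Stmt12Aux.adj n i j := by
    intro i j
    constructor
    · rintro ⟨t, ⟨h1, h2⟩ | ⟨h1, h2⟩⟩
      · exact Or.inl (by rw [hv h2, hv h1])
      · exact Or.inr (by rw [hv h2, hv h1])
    · rintro (h | h)
      · exact ⟨i, Or.inl ⟨rfl, by rw [h]⟩⟩
      · exact ⟨j, Or.inr ⟨rfl, by rw [h]⟩⟩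
  have F1 : ∀ i j : Fin n, Stmt12Aux.adj n i j → v j < v i → ¬ ([v j, v i] <+ w) := by
    intro i j ha hlt
    have h := (hiff (v i) (hVmem i) (v j) (hVmem j) (ne_of_gt hlt)).mp ((hE i j).mpr ha)
    exact (Stmt12Aux.key w (v i) (v j) hlt).mp h
  have F2 : ∀ i j : Fin n, ¬ Stmt12Aux.adj n i j → v j < v i → [v j, v i] <+ w := by
    intro i j ha hlt
    by_contra hc
    have hnm : NoMatch12 (w.filter (fun a => a = v i ∨ a = v j)) :=
      (Stmt12Aux.key w (v i) (v j) hlt).mpr hc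
    have hEdge := (hiff (v i) (hVmem i) (v j) (hVmem j) (ne_of_gt hlt)).mpr hnm
    exact ha ((hE i j).mp hEdge)
  have desc : ∀ a b c : Fin n, Stmt12Aux.adj n a b → Stmt12Aux.adj n b c →
      ¬ Stmt12Aux.adj n a c → v b < v a → v c < v b → False := by
    intro a b c hab hbc hac h1 h2
    exact Stmt12Aux.before_trans (v a) (v b) (v c) (ne_of_gt h2) w
      (F1 a b hab h1) (F1 b c hbc h2) (hmemw b) (F2 a c hac (h2.trans h1))
  -- the vertex with maximal label
  obtain ⟨m, hm⟩ := Finite.exists_max v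
  set idx : ℕ → Fin n := fun k => m + (k : Fin n) with hidxdef
  have hidx_mod : ∀ a b : ℕ, idx a = idx b ↔ a % n = b % n := by
    intro a b
    rw [hidxdef]
    simp only []
    rw [add_right_inj, Fin.ext_iff, Fin.val_natCast, Fin.val_natCast]
  have hidx_eq : ∀ a b : ℕ, a < n → b < n → (idx a = idx b ↔ a = b) := by
    intro a b ha hb
    rw [hidx_mod, Nat.mod_eq_of_lt ha, Nat.mod_eq_of_lt hb]
  have hidx_succ : ∀ a : ℕ, idx a + 1 = idx (a + 1) := by
    intro a
    rw [hidxdef]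
    simp only []
    rw [Nat.cast_add_one, add_assoc]
  have hAdj_iff : ∀ a b : ℕ,
      Stmt12Aux.adj n (idx a) (idx b) ↔ (b % n = (a + 1) % n ∨ a % n = (b + 1) % n) := by
    intro a b
    unfold Stmt12Aux.adj
    rw [hidx_succ a, hidx_succ b, hidx_mod b (a + 1), hidx_mod a (b + 1)]
  have hidx0 : idx 0 = m := by
    rw [hidxdef]; simp
  have hmax : ∀ k : ℕ, k < n → 0 < k → v (idx k) < v (idx 0) := by
    intro k hk hk0
    have h1 : v (idx k) ≤ v (idx 0) := by rw [hidx0]; exact hm _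
    exact lt_of_le_of_ne h1 (hvne (fun h => by
      have := (hidx_eq k 0 hk (by omega)).mp h; omega))
  have hvneidx : ∀ a b : ℕ, a < n → b < n → a ≠ b → v (idx a) ≠ v (idx b) :=
    fun a b ha hb hab => hvne (fun h => hab ((hidx_eq a b ha hb).mp h))
  -- modular arithmetic facts
  have e0 : 0 % n = 0 := Nat.zero_mod n
  have e1 : 1 % n = 1 := Nat.mod_eq_of_lt (by omega)
  have e2 : 2 % n = 2 := Nat.mod_eq_of_lt (by omega)
  have e3 : 3 % n = 3 := Nat.mod_eq_of_lt (by omega)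
  have e4 : 4 % n = 4 := Nat.mod_eq_of_lt (by omega)
  have en : n % n = 0 := Nat.mod_self n
  have en1 : (n - 1) % n = n - 1 := Nat.mod_eq_of_lt (by omega)
  have en2 : (n - 2) % n = n - 2 := Nat.mod_eq_of_lt (by omega)
  have en3 : (n - 3) % n = n - 3 := Nat.mod_eq_of_lt (by omega)
  have s1 : n - 3 + 1 = n - 2 := by omega
  have s2 : n - 2 + 1 = n - 1 := by omega
  have s3 : n - 1 + 1 = n := by omega
  -- adjacency facts on the cycle: M = idx 0, D = idx 1, E2 = idx 2, F = idx 3,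
  -- C = idx (n-1), B = idx (n-2), A = idx (n-3)
  have adjMD : Stmt12Aux.adj n (idx 0) (idx 1) := by
    rw [hAdj_iff]; simp only [s1, s2, s3, e0, e1, e2, e3, e4, en, en1, en2, en3] <;>
      first | exact Or.inl trivial | exact Or.inr trivial | omega
  have adjDE : Stmt12Aux.adj n (idx 1) (idx 2) := by
    rw [hAdj_iff]; simp only [s1, s2, s3, e0, e1, e2, e3, e4, en, en1, en2, en3] <;>
      first | exact Or.inl trivial | exact Or.inr trivial | omega
  have adjEF : Stmt12Aux.adj n (idx 2) (idx 3) := by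
    rw [hAdj_iff]; simp only [s1, s2, s3, e0, e1, e2, e3, e4, en, en1, en2, en3] <;>
      first | exact Or.inl trivial | exact Or.inr trivial | omega
  have adjAB : Stmt12Aux.adj n (idx (n - 3)) (idx (n - 2)) := by
    rw [hAdj_iff]; simp only [s1, s2, s3, e0, e1, e2, e3, e4, en, en1, en2, en3] <;>
      first | exact Or.inl trivial | exact Or.inr trivial | omega
  have adjBC : Stmt12Aux.adj n (idx (n - 2)) (idx (n - 1)) := by
    rw [hAdj_iff]; simp only [s1, s2, s3, e0, e1, e2, e3, e4, en, en1, en2, en3] <;>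
      first | exact Or.inl trivial | exact Or.inr trivial | omega
  have adjMC : Stmt12Aux.adj n (idx 0) (idx (n - 1)) := by
    rw [hAdj_iff]; simp only [s1, s2, s3, e0, e1, e2, e3, e4, en, en1, en2, en3] <;>
      first | exact Or.inl trivial | exact Or.inr trivial | omega
  have nadjMB : ¬ Stmt12Aux.adj n (idx 0) (idx (n - 2)) := by
    rw [hAdj_iff]; simp only [s1, s2, s3, e0, e1, e2, e3, e4, en, en1, en2, en3] <;>
      first | exact Or.inl trivial | exact Or.inr trivial | omega
  have nadjME : ¬ Stmt12Aux.adj n (idx 0) (idx 2) := by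
    rw [hAdj_iff]; simp only [s1, s2, s3, e0, e1, e2, e3, e4, en, en1, en2, en3] <;>
      first | exact Or.inl trivial | exact Or.inr trivial | omega
  have nadjAC : ¬ Stmt12Aux.adj n (idx (n - 3)) (idx (n - 1)) := by
    rw [hAdj_iff]; simp only [s1, s2, s3, e0, e1, e2, e3, e4, en, en1, en2, en3] <;>
      first | exact Or.inl trivial | exact Or.inr trivial | omega
  have nadjFD : ¬ Stmt12Aux.adj n (idx 3) (idx 1) := by
    rw [hAdj_iff]; simp only [s1, s2, s3, e0, e1, e2, e3, e4, en, en1, en2, en3] <;>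
      first | exact Or.inl trivial | exact Or.inr trivial | omega
  have nadjMA : ¬ Stmt12Aux.adj n (idx 0) (idx (n - 3)) := by
    rw [hAdj_iff]; simp only [s1, s2, s3, e0, e1, e2, e3, e4, en, en1, en2, en3] <;>
      first | exact Or.inl trivial | exact Or.inr trivial | omega
  have nadjBD : ¬ Stmt12Aux.adj n (idx (n - 2)) (idx 1) := by
    rw [hAdj_iff]; simp only [s1, s2, s3, e0, e1, e2, e3, e4, en, en1, en2, en3] <;>
      first | exact Or.inl trivial | exact Or.inr trivial | omega
  have nadjMF : ¬ Stmt12Aux.adj n (idx 0) (idx 3) := by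
    rw [hAdj_iff]; simp only [s1, s2, s3, e0, e1, e2, e3, e4, en, en1, en2, en3] <;>
      first | exact Or.inl trivial | exact Or.inr trivial | omega
  have nadjEC : ¬ Stmt12Aux.adj n (idx 2) (idx (n - 1)) := by
    rw [hAdj_iff]; simp only [s1, s2, s3, e0, e1, e2, e3, e4, en, en1, en2, en3] <;>
      first | exact Or.inl trivial | exact Or.inr trivial | omega
  -- maximality facts
  have hCM : v (idx (n - 1)) < v (idx 0) := hmax (n - 1) (by omega) (by omega)
  have hDM : v (idx 1) < v (idx 0) := hmax 1 (by omega) (by omega)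
  have hAM : v (idx (n - 3)) < v (idx 0) := hmax (n - 3) (by omega) (by omega)
  have hFM : v (idx 3) < v (idx 0) := hmax 3 (by omega) (by omega)
  -- local structure around the maximum
  have hBC : v (idx (n - 1)) < v (idx (n - 2)) := by
    rcases lt_or_gt_of_ne (hvneidx (n - 2) (n - 1) (by omega) (by omega) (by omega)) with h | h
    · exact ((desc (idx 0) (idx (n - 1)) (idx (n - 2)) adjMC
        (Stmt12Aux.adj_symm adjBC) nadjMB hCM h)).elim
    · exact h
  have hDE : v (idx 1) < v (idx 2) := by
    rcases lt_or_gt_of_ne (hvneidx 2 1 (by omega) (by omega) (by omega)) with h | h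
    · exact ((desc (idx 0) (idx 1) (idx 2) adjMD adjDE nadjME hDM h)).elim
    · exact h
  have hAB : v (idx (n - 3)) < v (idx (n - 2)) := by
    rcases lt_or_gt_of_ne (hvneidx (n - 2) (n - 3) (by omega) (by omega) (by omega)) with h | h
    · exact ((desc (idx (n - 3)) (idx (n - 2)) (idx (n - 1)) adjAB adjBC nadjAC h hBC)).elim
    · exact h
  have hFE : v (idx 3) < v (idx 2) := by
    rcases lt_or_gt_of_ne (hvneidx 2 3 (by omega) (by omega) (by omega)) with h | h
    · exact ((desc (idx 3) (idx 2) (idx 1) (Stmt12Aux.adj_symm adjEF)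
        (Stmt12Aux.adj_symm adjDE) nadjFD h hDE)).elim
    · exact h
  -- the two "2+2" steps
  have hBD : v (idx (n - 2)) < v (idx 1) := by
    rcases lt_or_gt_of_ne (hvneidx 1 (n - 2) (by omega) (by omega) (by omega)) with h | h
    · exact (Stmt12Aux.two_two (v (idx 0)) (v (idx 1)) (v (idx (n - 2))) (v (idx (n - 3))) w
        (F1 (idx 0) (idx 1) adjMD hDM)
        (F1 (idx (n - 2)) (idx (n - 3)) (Stmt12Aux.adj_symm adjAB) hAB)
        (F2 (idx 0) (idx (n - 3)) nadjMA hAM)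
        (F2 (idx (n - 2)) (idx 1) nadjBD h)).elim
    · exact h
  have hEC : v (idx 2) < v (idx (n - 1)) := by
    rcases lt_or_gt_of_ne (hvneidx (n - 1) 2 (by omega) (by omega) (by omega)) with h | h
    · exact (Stmt12Aux.two_two (v (idx 0)) (v (idx (n - 1))) (v (idx 2)) (v (idx 3)) w
        (F1 (idx 0) (idx (n - 1)) adjMC hCM)
        (F1 (idx 2) (idx 3) adjEF hFE)
        (F2 (idx 0) (idx 3) nadjMF hFM)
        (F2 (idx 2) (idx (n - 1)) nadjEC h)).elim
    · exact h
  omega
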